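/- arXiv:1609.01931 — 2 statements merged into one kernel-verified Lean document; each statement's English description precedes it below -/
import Mathlib

section
/- Let p ∈ NC(n), let p° be the non-crossing partition of [2n] formed by placing p on the odd positions and K(p) on the even positions, and let B be a block of p, identified with the corresponding block of p°. Then: (i) every block of p° adjacent to B in p° consists of even positions, i.e. comes from K(p); (ii) exactly one block of K(p) adjacent to B in p° has depth d_{p°} at most d_{p°}(B); (iii) the blocks of K(p) adjacent to B in p° with depth strictly larger than d_{p°}(B) number exactly |B| − 1, and for each 1 ≤ i ≤ |B|−1 exactly one of them has all of its elements lying strictly between the positions in [2n] of the i-th and (i+1)-th smallest elements of B. -/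
namespace NCPaper

/-- The index set `[n] = {1, …, n}` inside `ℕ`. -/
def Idx (n : ℕ) : Set ℕ := Set.Icc 1 n

/-- `r` is (the equivalence relation of) a partition of the set `S`:
a symmetric, transitive relation on `ℕ` whose domain is exactly `S`.
For `S ⊆ [n]` this encodes a partial partition of `[n]` with support `S`;
its blocks are the equivalence classes. -/
def IsPartitionOn (S : Set ℕ) (r : ℕ → ℕ → Prop) : Prop :=
  (∀ i j, r i j → r j i) ∧ (∀ i j k, r i j → r j k → r i k) ∧ (∀ i, r i i ↔ i ∈ S)

/-- A partition (relation) is non-crossing if there are no `i < j < k < l`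
with `i ∼ k`, `j ∼ l` and `i ≁ j`. -/
def NonCrossing (r : ℕ → ℕ → Prop) : Prop :=
  ∀ i j k l, i < j → j < k → k < l → r i k → r j l → r i j

/-- Refinement order on partitions encoded as relations:
`r ≤ s` iff every block of `r` is contained in a block of `s`. -/
def RelLE (r s : ℕ → ℕ → Prop) : Prop := ∀ i j, r i j → s i j

/-- Join of two partial partitions with complementary (disjoint) supports:
the partition whose blocks are the blocks of `r` together with those of `s`. -/
def relJoin (r s : ℕ → ℕ → Prop) : ℕ → ℕ → Prop := fun i j => r i j ∨ s i j

/-- `k` lies (weakly) between `i` and `j`, i.e. `k ∈ {min i j, …, max i j}`. -/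
def Between (i j k : ℕ) : Prop := min i j ≤ k ∧ k ≤ max i j

/-- The Kreweras complement `kr(r, S)` of the partial partition `(r, S)` of `[n]`:
the relation with support `[n] \ S` in which `i ∼ j` iff no element `k` of
`{i,…,j} ∩ S` is `r`-equivalent to an element `l` of `S \ {i,…,j}`. -/
def krRel (n : ℕ) (S : Set ℕ) (r : ℕ → ℕ → Prop) : ℕ → ℕ → Prop :=
  fun i j => i ∈ Idx n ∧ j ∈ Idx n ∧ i ∉ S ∧ j ∉ S ∧
    ∀ k l, k ∈ S → l ∈ S → Between i j k → ¬ Between i j l → ¬ r k l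

/-- Transport of a relation along a map. -/
def mapRel (f : ℕ → ℕ) (r : ℕ → ℕ → Prop) : ℕ → ℕ → Prop :=
  fun a b => ∃ i j, f i = a ∧ f j = b ∧ r i j

/-- `i ↦ 2i - δ(i)` where `δ(i) = 1` for odd `i` and `δ(i) = 0` for even `i`;
this maps `[2k]` onto `S = {1,4,5,8,…,4k-3,4k} ⊆ [4k]`. -/
def fS (i : ℕ) : ℕ := 2 * i - i % 2

/-- `i ↦ 2i - (1 - δ(i))`; this maps `[2k]` onto `Sᶜ = {2,3,6,7,…} ⊆ [4k]`. -/
def fSc (i : ℕ) : ℕ := 2 * i - (1 - i % 2)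

/-- The nested Kreweras complement `kr′(π)` of a partition `π` of `[2k]`:
transport `π` along `fS` to a partial partition of `[4k]` with support
`fS '' [2k]`, take its Kreweras complement and transport back along `fSc`. -/
def krNested (k : ℕ) (r : ℕ → ℕ → Prop) : ℕ → ℕ → Prop :=
  fun i j => krRel (4 * k) (fS '' Idx (2 * k)) (mapRel fS r) (fSc i) (fSc j)

/-- `π₀`: the partition of `[2k]` with blocks `{2i, 2i+1}`, indices mod `2k`
(so one block is `{2k, 1}`). -/
def piZero (k : ℕ) : ℕ → ℕ → Prop := fun i j =>
  i ∈ Idx (2 * k) ∧ j ∈ Idx (2 * k) ∧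
    (i = j ∨ (Even i ∧ j = i + 1) ∨ (Even j ∧ i = j + 1) ∨
      (i = 1 ∧ j = 2 * k) ∨ (j = 1 ∧ i = 2 * k))

/-- `π₁`: the partition of `[2k]` with blocks `{2i-1, 2i}`, `1 ≤ i ≤ k`. -/
def piOne (k : ℕ) : ℕ → ℕ → Prop := fun i j =>
  i ∈ Idx (2 * k) ∧ j ∈ Idx (2 * k) ∧
    (i = j ∨ (Odd i ∧ j = i + 1) ∨ (Odd j ∧ i = j + 1))

/-- The `i`-th odd position `2i - 1` in `[2n]`. -/
def oddPos (i : ℕ) : ℕ := 2 * i - 1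

/-- The `i`-th even position `2i` in `[2n]`. -/
def evenPos (i : ℕ) : ℕ := 2 * i

/-- The Kreweras complement `K(p)` of a partition `p` of `[n]`: transport `p`
along `i ↦ 2i-1` to the odd positions `σ = {1,3,…,2n-1}` of `[2n]`, take the
Kreweras complement there, and transport back along `i ↦ 2i`. -/
def Kmap (n : ℕ) (r : ℕ → ℕ → Prop) : ℕ → ℕ → Prop :=
  fun i j => krRel (2 * n) (oddPos '' Idx n) (mapRel oddPos r) (evenPos i) (evenPos j)

/-- `p° = (p̂,σ) ∨ (K̂(p),σᶜ)`: the partition of `[2n]` obtained by placing `p`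
on the odd positions and `K(p)` on the even positions. -/
def pCirc (n : ℕ) (p : ℕ → ℕ → Prop) : ℕ → ℕ → Prop :=
  relJoin (mapRel oddPos p) (mapRel evenPos (Kmap n p))

/-- `F(π)` for `π ≥ π₀`: `i ∼ j` iff `2i-1 ∼_π 2j-1`. -/
def Fmap (r : ℕ → ℕ → Prop) : ℕ → ℕ → Prop := fun i j => r (2 * i - 1) (2 * j - 1)

/-- `G(π)` for `π ≥ π₁`: `i ∼ j` iff `2i ∼_π 2j`. -/
def Gmap (r : ℕ → ℕ → Prop) : ℕ → ℕ → Prop := fun i j => r (2 * i) (2 * j)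

/-- `B` is a block of the partition (relation) `r`. -/
def IsBlock (r : ℕ → ℕ → Prop) (B : Set ℕ) : Prop := ∃ i, r i i ∧ B = {j | r i j}

/-- The number `|r|` of blocks of the partition `r`. -/
noncomputable def numBlocks (r : ℕ → ℕ → Prop) : ℕ := {B : Set ℕ | IsBlock r B}.ncard

/-- `B' ⪯ B` for `B = {i₁<…<i_t}`, `B' = {j₁<…<j_{t'}}`: `i₁ < j₁` and `j_{t'} < i_t`. -/
def Nested (B' B : Set ℕ) : Prop := sInf B < sInf B' ∧ sSup B' < sSup B

/-- The depth `d_p(B)` of a block `B`: the maximal number `m` of blocks in a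
chain `B = X₁ ⪯ X₂ ⪯ … ⪯ X_m` of blocks of `p`. -/
noncomputable def depth (p : ℕ → ℕ → Prop) (B : Set ℕ) : ℕ :=
  sSup {m : ℕ | ∃ c : ℕ → Set ℕ, c 1 = B ∧
    (∀ i, 1 ≤ i → i ≤ m → IsBlock p (c i)) ∧
    (∀ i, 1 ≤ i → i < m → Nested (c i) (c (i + 1)))}

/-- `p_{B,B'}`: the partition obtained from `p` by merging the blocks `B` and `B'`. -/
def mergeRel (p : ℕ → ℕ → Prop) (B B' : Set ℕ) : ℕ → ℕ → Prop :=
  fun i j => p i j ∨ (p i i ∧ p j j ∧ i ∈ B ∪ B' ∧ j ∈ B ∪ B')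

/-- Two distinct blocks `B, B'` of `p` are adjacent if replacing them by
`B ∪ B'` yields a non-crossing partition. -/
def Adjacent (p : ℕ → ℕ → Prop) (B B' : Set ℕ) : Prop :=
  IsBlock p B ∧ IsBlock p B' ∧ B ≠ B' ∧ NonCrossing (mergeRel p B B')

/-- The set of the `i` smallest elements of `B`. -/
def lowerPart (B : Set ℕ) (i : ℕ) : Set ℕ := {x ∈ B | (B ∩ Set.Iic x).ncard ≤ i}

/-- The set of the remaining elements of `B` (all but the `i` smallest). -/
def upperPart (B : Set ℕ) (i : ℕ) : Set ℕ := {x ∈ B | i < (B ∩ Set.Iic x).ncard}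

/-- `p_{B,i}`: the partition obtained from `p` by splitting the block `B` into
the block of its `i` smallest elements and the block of its remaining elements. -/
def splitRel (p : ℕ → ℕ → Prop) (B : Set ℕ) (i : ℕ) : ℕ → ℕ → Prop :=
  fun x y => p x y ∧ ((x ∈ lowerPart B i ∧ y ∈ lowerPart B i) ∨
    (x ∈ upperPart B i ∧ y ∈ upperPart B i) ∨ (x ∉ B ∧ y ∉ B))

/-- The `i`-th smallest element of `B` (1-indexed). -/
noncomputable def nthSmall (B : Set ℕ) (i : ℕ) : ℕ :=
  sInf {x | x ∈ B ∧ (B ∩ Set.Iic x).ncard = i}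

section KLayer

variable {n : ℕ} {p : ℕ → ℕ → Prop}

lemma psymm (hp : IsPartitionOn (Idx n) p) {i j : ℕ} (h : p i j) : p j i := hp.1 _ _ h

lemma ptrans (hp : IsPartitionOn (Idx n) p) {i j k : ℕ} (h : p i j) (h' : p j k) : p i k :=
  hp.2.1 _ _ _ h h'

lemma pdom (hp : IsPartitionOn (Idx n) p) {i j : ℕ} (h : p i j) : i ∈ Idx n ∧ j ∈ Idx n := by
  constructor
  · exact (hp.2.2 i).1 (ptrans hp h (psymm hp h))
  · exact (hp.2.2 j).1 (ptrans hp (psymm hp h) h)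

lemma idx_mem {m : ℕ} : m ∈ Idx n ↔ 1 ≤ m ∧ m ≤ n := Set.mem_Icc

lemma K_intro (hp : IsPartitionOn (Idx n) p) {a c : ℕ} (ha : a ∈ Idx n) (hc : c ∈ Idx n)
    (h : ∀ m m', p m m' → min a c < m → m ≤ max a c → min a c < m' ∧ m' ≤ max a c) :
    Kmap n p a c := by
  rw [idx_mem] at ha hc
  refine ⟨?_, ?_, ?_, ?_, ?_⟩
  · rw [idx_mem]; show 1 ≤ 2*a ∧ 2*a ≤ 2*n; omega
  · rw [idx_mem]; show 1 ≤ 2*c ∧ 2*c ≤ 2*n; omega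
  · rintro ⟨m, hm, hme⟩
    rw [idx_mem] at hm
    have : 2*m - 1 = 2*a := hme
    omega
  · rintro ⟨m, hm, hme⟩
    rw [idx_mem] at hm
    have : 2*m - 1 = 2*c := hme
    omega
  · rintro k l ⟨m, hm, rfl⟩ ⟨m', hm', rfl⟩ hbk hbl ⟨i, j, hi, hj, hij⟩
    rw [idx_mem] at hm hm'
    obtain ⟨hid, hjd⟩ := pdom hp hij
    rw [idx_mem] at hid hjd
    have hi' : 2*i - 1 = 2*m - 1 := hi
    have hj' : 2*j - 1 = 2*m' - 1 := hj
    have him : i = m := by omega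
    have hjm : j = m' := by omega
    subst him; subst hjm
    obtain ⟨hb1, hb2⟩ := hbk
    have hb1' : min (2*a) (2*c) ≤ 2*i-1 := hb1
    have hb2' : 2*i-1 ≤ max (2*a) (2*c) := hb2
    have := h i j hij (by omega) (by omega)
    apply hbl
    constructor
    · show min (2*a) (2*c) ≤ 2*j - 1; omega
    · show 2*j - 1 ≤ max (2*a) (2*c); omega

lemma K_elim (hp : IsPartitionOn (Idx n) p) {a c m m' : ℕ} (hK : Kmap n p a c) (hm : p m m')
    (h1 : min a c < m) (h2 : m ≤ max a c) : min a c < m' ∧ m' ≤ max a c := by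
  by_contra hcon
  obtain ⟨_, _, _, _, hcond⟩ := hK
  obtain ⟨hmd, hmd'⟩ := pdom hp hm
  rw [idx_mem] at hmd hmd'
  refine hcond (oddPos m) (oddPos m') ⟨m, idx_mem.2 (by omega), rfl⟩
    ⟨m', idx_mem.2 (by omega), rfl⟩ ?_ ?_ ⟨m, m', rfl, rfl, hm⟩
  · constructor
    · show min (2*a) (2*c) ≤ 2*m - 1; omega
    · show 2*m - 1 ≤ max (2*a) (2*c); omega
  · rintro ⟨hb1, hb2⟩
    have hb1' : min (2*a) (2*c) ≤ 2*m' - 1 := hb1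
    have hb2' : 2*m' - 1 ≤ max (2*a) (2*c) := hb2
    omega

lemma K_dom {a c : ℕ} (hK : Kmap n p a c) : a ∈ Idx n ∧ c ∈ Idx n := by
  obtain ⟨h1, h2, _⟩ := hK
  rw [idx_mem] at h1 h2 ⊢
  rw [idx_mem]
  have h1' : 1 ≤ 2*a ∧ 2*a ≤ 2*n := h1
  have h2' : 1 ≤ 2*c ∧ 2*c ≤ 2*n := h2
  omega

lemma K_symm (hp : IsPartitionOn (Idx n) p) {a c : ℕ} (hK : Kmap n p a c) : Kmap n p c a := by
  obtain ⟨ha, hc⟩ := K_dom hK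
  refine K_intro hp hc ha ?_
  intro m m' hm h1 h2
  have := K_elim hp hK hm (by omega) (by omega)
  omega

lemma K_refl (hp : IsPartitionOn (Idx n) p) {a : ℕ} (ha : a ∈ Idx n) : Kmap n p a a := by
  refine K_intro hp ha ha ?_
  intro m m' _ h1 h2
  omega

lemma K_trans (hp : IsPartitionOn (Idx n) p) {a b c : ℕ} (hab : Kmap n p a b)
    (hbc : Kmap n p b c) : Kmap n p a c := by
  obtain ⟨ha, hb⟩ := K_dom hab
  obtain ⟨_, hc⟩ := K_dom hbc
  refine K_intro hp ha hc ?_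
  intro m m' hm h1 h2
  rcases le_total a b with h|h <;> rcases le_total b c with h'|h'
  · -- a ≤ b, b ≤ c
    by_cases hmb : m ≤ b
    · have := K_elim hp hab hm (by omega) (by omega)
      omega
    · have := K_elim hp hbc hm (by omega) (by omega)
      omega
  · -- a ≤ b, c ≤ b
    rcases le_total a c with h''|h''
    · -- a ≤ c ≤ b
      have t1 := K_elim hp hab hm (by omega) (by omega)
      by_cases hm' : m' ≤ c
      · omega
      · have := K_elim hp hbc (psymm hp hm) (by omega) (by omega)
        omega
    · -- c ≤ a ≤ b
      have t1 := K_elim hp hbc hm (by omega) (by omega)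
      by_cases hm' : m' ≤ a
      · omega
      · have := K_elim hp hab (psymm hp hm) (by omega) (by omega)
        omega
  · -- b ≤ a, b ≤ c
    rcases le_total a c with h''|h''
    · -- b ≤ a ≤ c
      have t1 := K_elim hp hbc hm (by omega) (by omega)
      by_cases hm' : a < m'
      · omega
      · have := K_elim hp hab (psymm hp hm) (by omega) (by omega)
        omega
    · -- b ≤ c ≤ a
      have t1 := K_elim hp hab hm (by omega) (by omega)
      by_cases hm' : c < m'
      · omega
      · have := K_elim hp hbc (psymm hp hm) (by omega) (by omega)
        omega
  · -- b ≤ a, c ≤ b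
    by_cases hmb : m ≤ b
    · have := K_elim hp hbc hm (by omega) (by omega)
      omega
    · have := K_elim hp hab hm (by omega) (by omega)
      omega

lemma K_nc (hp : IsPartitionOn (Idx n) p) {a b c d : ℕ} (h1 : a < b) (h2 : b < c) (h3 : c < d)
    (hac : Kmap n p a c) (hbd : Kmap n p b d) : Kmap n p a b := by
  obtain ⟨ha, _⟩ := K_dom hac
  obtain ⟨hb, _⟩ := K_dom hbd
  refine K_intro hp ha hb ?_
  intro m m' hm hm1 hm2
  have t1 := K_elim hp hac hm (by omega) (by omega)
  by_cases hm' : m' ≤ b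
  · omega
  · have := K_elim hp hbd (psymm hp hm) (by omega) (by omega)
    omega

lemma K_not (hp : IsPartitionOn (Idx n) p) {a c : ℕ} (ha : a ∈ Idx n) (hc : c ∈ Idx n)
    (h : ¬ Kmap n p a c) : ∃ m m', p m m' ∧ min a c < m ∧ m ≤ max a c ∧
      ¬ (min a c < m' ∧ m' ≤ max a c) := by
  by_contra hcon
  push_neg at hcon
  exact h (K_intro hp ha hc fun m m' hm h1 h2 => hcon m m' hm h1 h2)

end KLayer
section RLayer

variable {n : ℕ} {p : ℕ → ℕ → Prop}

lemma r_oo (hp : IsPartitionOn (Idx n) p) {a c : ℕ} (h : p a c) :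
    pCirc n p (2*a - 1) (2*c - 1) :=
  Or.inl ⟨a, c, rfl, rfl, h⟩

lemma r_ee {a c : ℕ} (h : Kmap n p a c) : pCirc n p (2*a) (2*c) :=
  Or.inr ⟨a, c, rfl, rfl, h⟩

lemma r_cases (hp : IsPartitionOn (Idx n) p) {x y : ℕ} (h : pCirc n p x y) :
    (∃ a c, a ∈ Idx n ∧ c ∈ Idx n ∧ x = 2*a - 1 ∧ y = 2*c - 1 ∧ p a c) ∨
    (∃ a c, a ∈ Idx n ∧ c ∈ Idx n ∧ x = 2*a ∧ y = 2*c ∧ Kmap n p a c) := by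
  rcases h with ⟨i, j, hi, hj, hij⟩ | ⟨i, j, hi, hj, hij⟩
  · obtain ⟨h1, h2⟩ := pdom hp hij
    exact Or.inl ⟨i, j, h1, h2, hi.symm, hj.symm, hij⟩
  · obtain ⟨h1, h2⟩ := K_dom hij
    exact Or.inr ⟨i, j, h1, h2, hi.symm, hj.symm, hij⟩

lemma r_oo_iff (hp : IsPartitionOn (Idx n) p) {a c : ℕ} (ha : 1 ≤ a) (hc : 1 ≤ c) :
    pCirc n p (2*a - 1) (2*c - 1) ↔ p a c := by
  constructor
  · intro h
    rcases r_cases hp h with ⟨a', c', ha', hc', e1, e2, hr⟩ | ⟨a', c', ha', hc', e1, e2, hr⟩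
    · rw [idx_mem] at ha' hc'
      have : a' = a ∧ c' = c := by omega
      rw [← this.1, ← this.2]; exact hr
    · rw [idx_mem] at ha' hc'
      omega
  · exact r_oo hp

lemma r_ee_iff (hp : IsPartitionOn (Idx n) p) {a c : ℕ} (ha : 1 ≤ a) (hc : 1 ≤ c) :
    pCirc n p (2*a) (2*c) ↔ Kmap n p a c := by
  constructor
  · intro h
    rcases r_cases hp h with ⟨a', c', ha', hc', e1, e2, hr⟩ | ⟨a', c', ha', hc', e1, e2, hr⟩
    · rw [idx_mem] at ha' hc'
      omega
    · rw [idx_mem] at ha' hc'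
      have : a' = a ∧ c' = c := by omega
      rw [← this.1, ← this.2]; exact hr
  · exact r_ee

lemma r_parity (hp : IsPartitionOn (Idx n) p) {x y : ℕ} (h : pCirc n p x y) : x % 2 = y % 2 := by
  rcases r_cases hp h with ⟨a, c, ha, hc, e1, e2, _⟩ | ⟨a, c, ha, hc, e1, e2, _⟩ <;>
    rw [idx_mem] at ha hc <;> omega

lemma r_symm (hp : IsPartitionOn (Idx n) p) {x y : ℕ} (h : pCirc n p x y) : pCirc n p y x := by
  rcases r_cases hp h with ⟨a, c, ha, hc, e1, e2, hr⟩ | ⟨a, c, ha, hc, e1, e2, hr⟩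
  · rw [e1, e2]; exact r_oo hp (psymm hp hr)
  · rw [e1, e2]; exact r_ee (K_symm hp hr)

lemma r_trans (hp : IsPartitionOn (Idx n) p) {x y z : ℕ} (h : pCirc n p x y)
    (h' : pCirc n p y z) : pCirc n p x z := by
  rcases r_cases hp h with ⟨a, c, ha, hc, e1, e2, hr⟩ | ⟨a, c, ha, hc, e1, e2, hr⟩ <;>
    rcases r_cases hp h' with ⟨a', c', ha', hc', e1', e2', hr'⟩ | ⟨a', c', ha', hc', e1', e2', hr'⟩ <;>
    rw [idx_mem] at ha hc ha' hc'
  · have : c = a' := by omega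
    subst this
    rw [e1, e2']; exact r_oo hp (ptrans hp hr hr')
  · omega
  · omega
  · have : c = a' := by omega
    subst this
    rw [e1, e2']; exact r_ee (K_trans hp hr hr')

lemma r_refl (hp : IsPartitionOn (Idx n) p) {x : ℕ} (hx : x ∈ Idx (2*n)) : pCirc n p x x := by
  rw [idx_mem] at hx
  rcases Nat.even_or_odd x with ⟨m, hm⟩ | ⟨m, hm⟩
  · have hx' : x = 2*m := by omega
    rw [hx']
    exact r_ee (K_refl hp (idx_mem.2 (by omega)))
  · have hx' : x = 2*(m+1) - 1 := by omega
    rw [hx']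
    exact r_oo hp ((hp.2.2 (m+1)).2 (idx_mem.2 (by omega)))

lemma r_dom (hp : IsPartitionOn (Idx n) p) {x y : ℕ} (h : pCirc n p x y) :
    x ∈ Idx (2*n) ∧ y ∈ Idx (2*n) := by
  rcases r_cases hp h with ⟨a, c, ha, hc, e1, e2, _⟩ | ⟨a, c, ha, hc, e1, e2, _⟩ <;>
    rw [idx_mem] at ha hc <;> constructor <;> rw [idx_mem] <;> omega

lemma pcirc_nc (hp : IsPartitionOn (Idx n) p) (hnc : NonCrossing p) : NonCrossing (pCirc n p) := by
  intro i j k l hij hjk hkl hik hjl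
  rcases r_cases hp hik with ⟨a, c, ha, hc, e1, e2, hr⟩ | ⟨a, c, ha, hc, e1, e2, hr⟩ <;>
    rcases r_cases hp hjl with ⟨b, d, hb, hd, f1, f2, hr'⟩ | ⟨b, d, hb, hd, f1, f2, hr'⟩ <;>
    rw [idx_mem] at ha hc hb hd <;> subst e1 e2 f1 f2
  · -- oo oo
    exact r_oo hp (hnc a b c d (by omega) (by omega) (by omega) hr hr')
  · -- oo ee : contradiction
    exfalso
    have := K_elim hp hr' (psymm hp hr) (by omega) (by omega)
    omega
  · -- ee oo : contradiction
    exfalso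
    have := K_elim hp hr hr' (by omega) (by omega)
    omega
  · -- ee ee
    exact r_ee (K_nc hp (by omega) (by omega) (by omega) hr hr')

/-- blocks agree on any representative -/
lemma block_rerep (hp : IsPartitionOn (Idx n) p) {u v : ℕ} (h : pCirc n p u v) :
    {y | pCirc n p u y} = {y | pCirc n p v y} := by
  ext y
  constructor
  · intro hy; exact r_trans hp (r_symm hp h) hy
  · intro hy; exact r_trans hp h hy

end RLayer
section MergeLayer

variable {n : ℕ} {p : ℕ → ℕ → Prop}

lemma odd_block_mem (hp : IsPartitionOn (Idx n) p) {b0 x : ℕ} (h1 : 1 ≤ b0)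
    (h : pCirc n p (2*b0 - 1) x) : ∃ m, p b0 m ∧ x = 2*m - 1 ∧ 1 ≤ m ∧ m ≤ n := by
  rcases r_cases hp h with ⟨a, c, ha, hc, e1, e2, hr⟩ | ⟨a, c, ha, hc, e1, e2, hr⟩ <;>
    rw [idx_mem] at ha hc
  · have : a = b0 := by omega
    subst this
    exact ⟨c, hr, e2, hc.1, hc.2⟩
  · omega

lemma even_block_mem (hp : IsPartitionOn (Idx n) p) {b x : ℕ} (h1 : 1 ≤ b)
    (h : pCirc n p (2*b) x) : ∃ f, Kmap n p b f ∧ x = 2*f ∧ 1 ≤ f ∧ f ≤ n := by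
  rcases r_cases hp h with ⟨a, c, ha, hc, e1, e2, hr⟩ | ⟨a, c, ha, hc, e1, e2, hr⟩ <;>
    rw [idx_mem] at ha hc
  · omega
  · have : a = b := by omega
    subst this
    exact ⟨c, hr, e2, hc.1, hc.2⟩

lemma merge_ok (hp : IsPartitionOn (Idx n) p) (hnc : NonCrossing p) {b0 b : ℕ}
    (hb0 : p b0 b0) (hb : p b0 b) :
    NonCrossing (mergeRel (pCirc n p)
      {y | pCirc n p (2*b0 - 1) y} {y | pCirc n p (2*b) y}) := by
  have hb0I := (pdom hp hb0).1
  have hbI := (pdom hp hb).2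
  rw [idx_mem] at hb0I hbI
  have pbb : p b b := ptrans hp (psymm hp hb) hb
  intro i j k l hij hjk hkl h1 h2
  rcases h1 with h1 | ⟨hri, hrk, hiM, hkM⟩
  · rcases h2 with h2 | ⟨hrj, hrl, hjM, hlM⟩
    · exact Or.inl (pcirc_nc hp hnc i j k l hij hjk hkl h1 h2)
    · -- h1 : r i k ; j l ∈ M
      by_cases hiM : i ∈ {y | pCirc n p (2*b0 - 1) y} ∪ {y | pCirc n p (2*b) y}
      · exact Or.inr ⟨r_trans hp h1 (r_symm hp h1), hrj, hiM, hjM⟩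
      · have hkM : k ∉ {y | pCirc n p (2*b0 - 1) y} ∪ {y | pCirc n p (2*b) y} := by
          intro hk
          rcases hk with hk | hk
          · exact hiM (Or.inl (r_trans hp hk (r_symm hp h1)))
          · exact hiM (Or.inr (r_trans hp hk (r_symm hp h1)))
        rcases hjM with hjX | hjE <;> rcases hlM with hlX | hlE
        · exact Or.inl (pcirc_nc hp hnc i j k l hij hjk hkl h1
            (r_trans hp (r_symm hp hjX) hlX))
        · -- j ∈ X, l ∈ E : contradiction
          exfalso
          obtain ⟨y, pby, rfl, hy1, hy2⟩ := odd_block_mem hp (by omega) hjX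
          obtain ⟨g, kbg, rfl, hg1, hg2⟩ := even_block_mem hp (by omega) hlE
          have pyb : p y b := ptrans hp (psymm hp pby) hb
          rcases r_cases hp h1 with ⟨x, z, hxI, hzI, rfl, rfl, pxz⟩ |
            ⟨x, z, hxI, hzI, rfl, rfl, kxz⟩ <;> rw [idx_mem] at hxI hzI
          · -- oo: i = 2x-1, k = 2z-1
            have hnx : ¬ p b0 x := fun h => hiM (Or.inl (r_oo hp h))
            have hnz : ¬ p b0 z := fun h => hkM (Or.inl (r_oo hp h))
            rcases lt_trichotomy b x with hbx | hbx | hbx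
            · have := hnc b x y z hbx (by omega) (by omega)
                (ptrans hp (psymm hp hb) pby) pxz
              exact hnx (ptrans hp hb this)
            · exact hnx (hbx ▸ hb)
            · rcases lt_trichotomy z b with hzb | hzb | hzb
              · have := hnc x y z b (by omega) (by omega) hzb pxz pyb
                exact hnx (ptrans hp pby (psymm hp this))
              · exact hnz (hzb ▸ hb)
              · have := K_elim hp kbg (psymm hp pxz) (by omega) (by omega)
                omega
          · -- ee: i = 2x, k = 2z
            have hnKbx : ¬ Kmap n p b x := fun h => hiM (Or.inr (r_ee h))
            have hbin := K_elim hp kxz pyb (by omega) (by omega)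
            rcases eq_or_lt_of_le (by omega : b ≤ z) with hbz | hbz
            · exact hnKbx (K_symm hp (hbz ▸ kxz))
            · exact hnKbx (K_symm hp (K_nc hp (by omega) hbz (by omega) kxz kbg))
        · -- j ∈ E, l ∈ X : contradiction
          exfalso
          obtain ⟨f, kbf, rfl, hf1, hf2⟩ := even_block_mem hp (by omega) hjE
          obtain ⟨y, pby, rfl, hy1, hy2⟩ := odd_block_mem hp (by omega) hlX
          have pyb : p y b := ptrans hp (psymm hp pby) hb
          rcases r_cases hp h1 with ⟨x, z, hxI, hzI, rfl, rfl, pxz⟩ |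
            ⟨x, z, hxI, hzI, rfl, rfl, kxz⟩ <;> rw [idx_mem] at hxI hzI
          · -- oo: i = 2x-1, k = 2z-1 ; x ≤ f < z < y
            have hnx : ¬ p b0 x := fun h => hiM (Or.inl (r_oo hp h))
            have hnz : ¬ p b0 z := fun h => hkM (Or.inl (r_oo hp h))
            rcases le_or_gt b f with hbf | hbf
            · rcases lt_trichotomy x b with hxb | hxb | hxb
              · have := hnc x b z y hxb (by omega) (by omega) pxz
                  (ptrans hp (psymm hp hb) pby)
                exact hnx (ptrans hp hb (psymm hp this))
              · exact hnx (hxb ▸ hb)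
              · have := K_elim hp kbf pxz (by omega) (by omega)
                omega
            · rcases le_or_gt z b with hzb | hzb
              · have := K_elim hp kbf (psymm hp pxz) (by omega) (by omega)
                omega
              · have := hnc x b z y (by omega) hzb (by omega) pxz
                  (ptrans hp (psymm hp hb) pby)
                exact hnx (ptrans hp hb (psymm hp this))
          · -- ee: i = 2x, k = 2z ; x < f < z < y
            have hnKbx : ¬ Kmap n p b x := fun h => hiM (Or.inr (r_ee h))
            have hbno : ¬ (x < b ∧ b ≤ z) := by
              rintro ⟨u1, u2⟩
              have := K_elim hp kxz (psymm hp pyb) (by omega) (by omega)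
              omega
            rcases lt_trichotomy b x with hbx | hbx | hbx
            · exact hnKbx (K_nc hp hbx (by omega) (by omega) kbf kxz)
            · exact hnKbx (by rw [hbx]; exact K_refl hp (K_dom kxz).1)
            · have hzb : z < b := by
                by_contra hcon
                exact hbno ⟨hbx, by omega⟩
              have kxf : Kmap n p x f := K_nc hp (by omega) (by omega) hzb kxz
                (K_symm hp kbf)
              exact hnKbx (K_symm hp (K_trans hp kxf (K_symm hp kbf)))
        · exact Or.inl (pcirc_nc hp hnc i j k l hij hjk hkl h1
            (r_trans hp (r_symm hp hjE) hlE))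
  · rcases h2 with h2 | ⟨hrj, hrl, hjM, hlM⟩
    · -- i k ∈ M ; h2 : r j l
      by_cases hjM : j ∈ {y | pCirc n p (2*b0 - 1) y} ∪ {y | pCirc n p (2*b) y}
      · exact Or.inr ⟨hri, r_trans hp h2 (r_symm hp h2), hiM, hjM⟩
      · have hlM : l ∉ {y | pCirc n p (2*b0 - 1) y} ∪ {y | pCirc n p (2*b) y} := by
          intro hl
          rcases hl with hl | hl
          · exact hjM (Or.inl (r_trans hp hl (r_symm hp h2)))
          · exact hjM (Or.inr (r_trans hp hl (r_symm hp h2)))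
        rcases hiM with hiX | hiE <;> rcases hkM with hkX | hkE
        · exact Or.inl (pcirc_nc hp hnc i j k l hij hjk hkl
            (r_trans hp (r_symm hp hiX) hkX) h2)
        · -- i ∈ X, k ∈ E : contradiction
          exfalso
          obtain ⟨x, pbx, rfl, hx1, hx2⟩ := odd_block_mem hp (by omega) hiX
          obtain ⟨g, kbg, rfl, hg1, hg2⟩ := even_block_mem hp (by omega) hkE
          rcases r_cases hp h2 with ⟨m, m', hmI, hmI', rfl, rfl, pmm'⟩ |
            ⟨f, f', hfI, hfI', rfl, rfl, kff'⟩
          · -- oo: j = 2m-1, l = 2m'-1 ; x < m ≤ g < m'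
            rw [idx_mem] at hmI hmI'
            have hnm : ¬ p b0 m := fun h => hjM (Or.inl (r_oo hp h))
            rcases lt_or_ge b m with hbm | hbm
            · have := K_elim hp kbg pmm' (by omega) (by omega)
              omega
            · have hmb : m < b := by
                rcases eq_or_lt_of_le hbm with h | h
                · exact absurd (h ▸ hb) hnm
                · exact h
              rcases le_or_gt m' b with hm'b | hm'b
              · have := K_elim hp kbg (psymm hp pmm') (by omega) (by omega)
                omega
              · have pxb : p x b := ptrans hp (psymm hp pbx) hb
                have := hnc x m b m' (by omega) hmb hm'b pxb pmm'
                exact hnm (ptrans hp pbx this)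
          · -- ee: j = 2f, l = 2f' ; x ≤ f < g < f'
            rw [idx_mem] at hfI hfI'
            have hnbf : ¬ Kmap n p b f := fun h => hjM (Or.inr (r_ee h))
            rcases lt_trichotomy b f with h | h | h
            · exact hnbf (K_nc hp h (by omega) (by omega) kbg kff')
            · exact hnbf (h ▸ K_refl hp (K_dom kbg).1)
            · rcases le_or_gt b f' with h' | h'
              · have pbx : p b x := ptrans hp (psymm hp hb) pbx
                have := K_elim hp kff' pbx (by omega) (by omega)
                omega
              · have kfg : Kmap n p f g := K_nc hp (by omega) (by omega) h' kff'
                  (K_symm hp kbg)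
                exact hnbf (K_symm hp (K_trans hp kfg (K_symm hp kbg)))
        · -- i ∈ E, k ∈ X : contradiction
          exfalso
          obtain ⟨g, kbg, rfl, hg1, hg2⟩ := even_block_mem hp (by omega) hiE
          obtain ⟨y, pby, rfl, hy1, hy2⟩ := odd_block_mem hp (by omega) hkX
          have pyb : p y b := ptrans hp (psymm hp pby) hb
          rcases r_cases hp h2 with ⟨m, m', hmI, hmI', rfl, rfl, pmm'⟩ |
            ⟨f, f', hfI, hfI', rfl, rfl, kff'⟩
          · -- oo: j = 2m-1, l = 2m'-1 ; g < m < y < m'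
            rw [idx_mem] at hmI hmI'
            have hnm : ¬ p b0 m := fun h => hjM (Or.inl (r_oo hp h))
            have hnm' : ¬ p b0 m' := fun h => hlM (Or.inl (r_oo hp h))
            rcases le_or_gt m b with hmb | hmb
            · have hmb' : m < b := by
                rcases eq_or_lt_of_le hmb with h | h
                · exact absurd (h ▸ hb) hnm
                · exact h
              have t := K_elim hp kbg pmm' (by omega) (by omega)
              have hm'b : m' < b := by
                rcases lt_trichotomy m' b with h | h | h
                · exact h
                · exact absurd (h ▸ hb) hnm'
                · omega
              have := hnc m y m' b (by omega) (by omega) hm'b pmm' pyb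
              exact hnm (ptrans hp pby (psymm hp this))
            · have := hnc b m y m' hmb (by omega) (by omega)
                (ptrans hp (psymm hp hb) pby) pmm'
              exact hnm (ptrans hp hb this)
          · -- ee: j = 2f, l = 2f' ; g < f < y ≤ f'
            rw [idx_mem] at hfI hfI'
            have hnbf : ¬ Kmap n p b f := fun h => hjM (Or.inr (r_ee h))
            have hnbf' : ¬ Kmap n p b f' := fun h => hlM (Or.inr (r_ee h))
            have hbin := K_elim hp kff' pyb (by omega) (by omega)
            rcases eq_or_lt_of_le (by omega : b ≤ f') with h | h
            · exact hnbf' (h ▸ K_refl hp (pdom hp hb).2)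
            · have kgf : Kmap n p g f := K_nc hp (by omega) (by omega) h
                (K_symm hp kbg) kff'
              exact hnbf (K_trans hp kbg kgf)
        · exact Or.inl (pcirc_nc hp hnc i j k l hij hjk hkl
            (r_trans hp (r_symm hp hiE) hkE) h2)
    · exact Or.inr ⟨hri, hrj, hiM, hjM⟩

end MergeLayer
section OddAdj

variable {n : ℕ} {p : ℕ → ℕ → Prop}

lemma pblock_bdd (hp : IsPartitionOn (Idx n) p) (d : ℕ) : BddAbove {m | p d m} :=
  ⟨n, fun x hx => (idx_mem.1 (pdom hp hx).2).2⟩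

lemma K_parent (hp : IsPartitionOn (Idx n) p) (hnc : NonCrossing p) {d : ℕ} (hd : p d d)
    (h2 : 2 ≤ sInf {m | p d m}) :
    Kmap n p (sInf {m | p d m} - 1) (sSup {m | p d m}) := by
  have hlo : p d (sInf {m | p d m}) := Nat.sInf_mem ⟨d, hd⟩
  have hhi : p d (sSup {m | p d m}) := Nat.sSup_mem ⟨d, hd⟩ (pblock_bdd hp d)
  set lo := sInf {m | p d m} with hlodef
  set hi := sSup {m | p d m} with hhidef
  have hbounds : ∀ m, p d m → lo ≤ m ∧ m ≤ hi := fun m hm =>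
    ⟨Nat.sInf_le hm, le_csSup (pblock_bdd hp d) hm⟩
  have hloI := idx_mem.1 (pdom hp hlo).2
  have hhiI := idx_mem.1 (pdom hp hhi).2
  have hlohi : lo ≤ hi := (hbounds hi hhi).1
  refine K_intro hp (idx_mem.2 (by omega)) (idx_mem.2 (by omega)) ?_
  intro m m' hm hm1 hm2
  by_cases hdm : p d m
  · have t1 := hbounds m' (ptrans hp hdm hm)
    have t2 := hbounds m hdm
    omega
  · have hmlo : m ≠ lo := fun h => hdm (h ▸ hlo)
    have hmhi : m ≠ hi := fun h => hdm (h ▸ hhi)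
    by_contra hcon
    have hm' : m' < lo ∨ hi < m' := by omega
    have plohi : p lo hi := ptrans hp (psymm hp hlo) hhi
    rcases hm' with h | h
    · have t := hnc m' lo m hi (by omega) (by omega) (by omega) (psymm hp hm) plohi
      exact hdm (ptrans hp hlo (ptrans hp (psymm hp t) (psymm hp hm)))
    · have t := hnc lo m hi m' (by omega) (by omega) (by omega) plohi hm
      exact hdm (ptrans hp hlo t)

lemma odd_not_adjacent (hp : IsPartitionOn (Idx n) p) (hnc : NonCrossing p) {a c : ℕ}
    (ha : p a a) (hc : p c c) (hac : ¬ p a c)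
    (H : NonCrossing (mergeRel (pCirc n p)
      {y | pCirc n p (2*a - 1) y} {y | pCirc n p (2*c - 1) y})) : False := by
  have haI := idx_mem.1 (pdom hp ha).1
  have hcI := idx_mem.1 (pdom hp hc).1
  set X := {y | pCirc n p (2*a - 1) y} with hX
  set Y := {y | pCirc n p (2*c - 1) y} with hY
  -- every element of X ∪ Y is an odd position whose p-block image stays in X ∪ Y
  have decodeM : ∀ w, w ∈ X ∪ Y → ∃ m, w = 2*m - 1 ∧ p m m ∧ 1 ≤ m ∧
      (∀ m', p m m' → (2*m' - 1) ∈ X ∪ Y) := by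
    intro w hw
    rcases hw with hw | hw
    · obtain ⟨m, ham, rfl, hm1, hm2⟩ := odd_block_mem hp (by omega) hw
      exact ⟨m, rfl, ptrans hp (psymm hp ham) ham, hm1,
        fun m' hmm' => Or.inl (r_oo hp (ptrans hp ham hmm'))⟩
    · obtain ⟨m, hcm, rfl, hm1, hm2⟩ := odd_block_mem hp (by omega) hw
      exact ⟨m, rfl, ptrans hp (psymm hp hcm) hcm, hm1,
        fun m' hmm' => Or.inr (r_oo hp (ptrans hp hcm hmm'))⟩
  -- the set of distances of "cross pairs"
  set D : Set ℕ := {d | ∃ u v, u < v ∧ v - u = d ∧ u ∈ X ∪ Y ∧ v ∈ X ∪ Y ∧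
    ¬ pCirc n p u v} with hD
  have hDne : D.Nonempty := by
    rcases lt_trichotomy (2*a - 1) (2*c - 1) with h | h | h
    · exact ⟨(2*c - 1) - (2*a - 1), 2*a - 1, 2*c - 1, h, rfl,
        Or.inl (r_oo hp ha), Or.inr (r_oo hp hc),
        fun hr => hac ((r_oo_iff hp (by omega) (by omega)).1 hr)⟩
    · exfalso
      have : a = c := by omega
      exact hac (this ▸ ha)
    · exact ⟨(2*a - 1) - (2*c - 1), 2*c - 1, 2*a - 1, h, rfl,
        Or.inr (r_oo hp hc), Or.inl (r_oo hp ha),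
        fun hr => hac (psymm hp ((r_oo_iff hp (by omega) (by omega)).1 hr))⟩
  obtain ⟨u, v, huv, hd0, huM, hvM, hnr⟩ := Nat.sInf_mem hDne
  have hgap : ∀ w, u < w → w < v → w ∉ X ∪ Y := by
    intro w hw1 hw2 hwM
    by_cases hr : pCirc n p u w
    · have h1 : ¬ pCirc n p w v := fun h => hnr (r_trans hp hr h)
      have h2 : (v - w) ∈ D := ⟨w, v, hw2, rfl, hwM, hvM, h1⟩
      have := Nat.sInf_le h2
      omega
    · have h2 : (w - u) ∈ D := ⟨u, w, hw1, rfl, huM, hwM, hr⟩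
      have := Nat.sInf_le h2
      omega
  obtain ⟨a', rfl, ha', ha'1, hclA⟩ := decodeM u huM
  obtain ⟨c', rfl, hc', hc'1, hclC⟩ := decodeM v hvM
  have hac' : ¬ p a' c' := fun h => hnr (r_oo hp h)
  have hlt : a' < c' := by omega
  have gapP : ∀ m, a' < m → m < c' → ¬ p a' m := fun m h1 h2 hm =>
    hgap (2*m - 1) (by omega) (by omega) (hclA m hm)
  have gapC : ∀ m, a' < m → m < c' → ¬ p c' m := fun m h1 h2 hm =>
    hgap (2*m - 1) (by omega) (by omega) (hclC m hm)
  -- exit lemma: an even position inside (u,v) related to an even position outside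
  have exit : ∀ f e, pCirc n p (2*f) (2*e) → (2*a' - 1) < 2*f → 2*f < (2*c' - 1) →
      (2*e < 2*a' - 1 ∨ (2*c' - 1) < 2*e) → False := by
    intro f e hr1 h1 h2 h3
    rcases h3 with h3 | h3
    · have := H (2*e) (2*a' - 1) (2*f) (2*c' - 1) h3 h1 h2
        (Or.inl (r_symm hp hr1))
        (Or.inr ⟨r_oo hp ha', r_oo hp hc', huM, hvM⟩)
      rcases this with hr | ⟨_, _, hm, _⟩
      · have := r_parity hp hr
        omega
      · obtain ⟨m, heq, _, hm1, _⟩ := decodeM _ hm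
        omega
    · have := H (2*a' - 1) (2*f) (2*c' - 1) (2*e) h1 h2 h3
        (Or.inr ⟨r_oo hp ha', r_oo hp hc', huM, hvM⟩)
        (Or.inl hr1)
      rcases this with hr | ⟨_, _, _, hm⟩
      · have := r_parity hp hr
        omega
      · obtain ⟨m, heq, _, hm1, _⟩ := decodeM _ hm
        omega
  have step1a : ∀ e, Kmap n p a' e → a' ≤ e ∧ e < c' := by
    intro e he
    have heI := idx_mem.1 (K_dom he).2
    by_contra hcon
    refine exit a' e (r_ee he) (by omega) (by omega) (by omega)
  have step1b : ∀ e, Kmap n p (c' - 1) e → a' ≤ e ∧ e < c' := by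
    intro e he
    have heI := idx_mem.1 (K_dom he).2
    by_contra hcon
    refine exit (c' - 1) e (by have := r_ee he; rwa [show 2*(c'-1) = 2*(c'-1) from rfl] at this)
      (by omega) (by omega) (by omega)
  by_cases hex : ∃ m, p c' m ∧ m < c'
  · obtain ⟨c'', hc'', hlt'⟩ := hex
    have hc''a : c'' < a' := by
      have h1 : ¬ (a' < c'' ∧ c'' < c') := fun h => gapC c'' h.1 h.2 hc''
      have h2 : c'' ≠ a' := fun h => hac' (psymm hp (h ▸ hc''))
      have h3 : 1 ≤ c'' := (idx_mem.1 (pdom hp hc'').2).1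
      omega
    by_cases hexA : ∃ m, p a' m ∧ a' < m
    · obtain ⟨b', hb', hlt''⟩ := hexA
      have hb'c : c' < b' := by
        have h1 : ¬ (a' < b' ∧ b' < c') := fun h => gapP b' h.1 h.2 hb'
        have h2 : b' ≠ c' := fun h => hac' (h ▸ hb')
        omega
      have t := hnc c'' a' c' b' hc''a hlt hb'c (psymm hp hc'') hb'
      exact hac' (ptrans hp (psymm hp t) (psymm hp hc''))
    · push_neg at hexA
      by_cases hα : 2 ≤ sInf {m | p a' m}
      · have hk := K_parent hp hnc ha' hα
        have hsup : sSup {m | p a' m} = a' := by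
          apply le_antisymm
          · exact csSup_le ⟨a', ha'⟩ fun m hm => by have := hexA m hm; omega
          · exact le_csSup (pblock_bdd hp a') ha'
        rw [hsup] at hk
        have t1 := step1a (sInf {m | p a' m} - 1) (K_symm hp hk)
        have t2 : sInf {m | p a' m} ≤ a' := Nat.sInf_le (show a' ∈ {m | p a' m} from ha')
        omega
      · have hmem : sInf {m | p a' m} ∈ {m | p a' m} := Nat.sInf_mem ⟨a', ha'⟩
        have hge : 1 ≤ sInf {m | p a' m} := (idx_mem.1 (pdom hp hmem).2).1
        have h1mem : p a' 1 := by
          have h1 : sInf {m | p a' m} = 1 := by omega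
          exact h1 ▸ hmem
        have hc''1 : 1 < c'' := by
          have h1 : 1 ≤ c'' := (idx_mem.1 (pdom hp hc'').2).1
          rcases eq_or_lt_of_le h1 with h | h
          · exfalso
            have hp1c : p 1 c' := by rw [h]; exact psymm hp hc''
            exact hac' (ptrans hp h1mem hp1c)
          · exact h
        have t := hnc 1 c'' a' c' hc''1 hc''a hlt (psymm hp h1mem) (psymm hp hc'')
        exact hac' (ptrans hp (ptrans hp h1mem t) (psymm hp hc''))
  · push_neg at hex
    have hinf : sInf {m | p c' m} = c' := by
      apply le_antisymm (Nat.sInf_le (show c' ∈ {m | p c' m} from hc'))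
      have hmem : sInf {m | p c' m} ∈ {m | p c' m} := Nat.sInf_mem ⟨c', hc'⟩
      have := hex _ hmem
      omega
    have hk := K_parent hp hnc hc' (by rw [hinf]; omega)
    rw [hinf] at hk
    have t1 := step1b (sSup {m | p c' m}) hk
    have t2 : c' ≤ sSup {m | p c' m} := le_csSup (pblock_bdd hp c') hc'
    omega

end OddAdj
section EvenAdj

variable {n : ℕ} {p : ℕ → ℕ → Prop}

/-- If the block of `2e` can be merged non-crossingly with the (odd) block of `b0`,
then `e` is `K`-related to some element of the `p`-block of `b0`. -/
lemma even_adjacent_hits (hp : IsPartitionOn (Idx n) p) (hnc : NonCrossing p) {b0 e : ℕ}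
    (hb0 : p b0 b0) (he : Kmap n p e e)
    (H : NonCrossing (mergeRel (pCirc n p)
      {y | pCirc n p (2*b0 - 1) y} {y | pCirc n p (2*e) y})) :
    ∃ b, p b0 b ∧ Kmap n p e b := by
  by_contra hno
  push_neg at hno
  have hb0I := idx_mem.1 (pdom hp hb0).1
  have heI := idx_mem.1 (K_dom he).1
  set Bs : Set ℕ := {m | p b0 m} with hBs
  have hBsne : Bs.Nonempty := ⟨b0, hb0⟩
  have hbmax : sSup Bs ∈ Bs := Nat.sSup_mem hBsne (pblock_bdd hp b0)
  have hbmin : sInf Bs ∈ Bs := Nat.sInf_mem hBsne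
  set bmax := sSup Bs
  set bmin := sInf Bs
  have hbmaxI := idx_mem.1 (pdom hp hbmax).2
  have hbminI := idx_mem.1 (pdom hp hbmin).2
  have hmm : bmin ≤ bmax := Nat.sInf_le hbmax
  -- choose the pivot b : the largest element of Bs that is ≤ e, if bmin ≤ e; else use bmax
  rcases lt_or_ge e bmin with hcase | hcase
  · -- e < bmin : use the obstruction for ¬ K e bmax
    obtain ⟨m, m', pmm', hm1, hm2, hm3⟩ := K_not hp (idx_mem.2 (by omega))
      (idx_mem.2 (by omega)) (hno bmax hbmax)
    have hminmax : min e bmax = e ∧ max e bmax = bmax := by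
      constructor <;> [exact min_eq_left (by omega); exact max_eq_right (by omega)]
    simp only [hminmax.1, hminmax.2] at hm1 hm2 hm3
    have hmnB : m ∉ Bs := by
      intro hm
      have t1 : bmin ≤ m' ∧ m' ≤ bmax := by
        have h' : p b0 m' := ptrans hp hm pmm'
        exact ⟨Nat.sInf_le h', le_csSup (pblock_bdd hp b0) h'⟩
      omega
    have hmI := idx_mem.1 (pdom hp pmm').1
    have hmI' := idx_mem.1 (pdom hp pmm').2
    have hmlt : m < bmax := by
      rcases eq_or_lt_of_le hm2 with h | h
      · exact absurd (h ▸ hbmax) hmnB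
      · exact h
    rcases (by omega : bmax < m' ∨ m' ≤ e) with hm' | hm'
    · -- l = 2m'-1 beyond 2bmax-1
      have := H (2*e) (2*m - 1) (2*bmax - 1) (2*m' - 1) (by omega) (by omega) (by omega)
        (Or.inr ⟨r_ee he, r_oo hp (ptrans hp (psymm hp hbmax) hbmax),
          Or.inr (r_ee he), Or.inl (r_oo hp hbmax)⟩)
        (Or.inl (r_oo hp pmm'))
      rcases this with hr | ⟨_, _, _, hm⟩
      · have := r_parity hp hr
        omega
      · rcases hm with hm | hm
        · obtain ⟨w, hw, hweq, _, _⟩ := odd_block_mem hp (by omega) hm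
          have : w = m := by omega
          exact hmnB (this ▸ hw)
        · obtain ⟨w, hw, hweq, hw1, _⟩ := even_block_mem hp (by omega) hm
          omega
    · -- m' ≤ e
      have := H (2*m' - 1) (2*e) (2*m - 1) (2*bmax - 1) (by omega) (by omega) (by omega)
        (Or.inl (r_oo hp (psymm hp pmm')))
        (Or.inr ⟨r_ee he, r_oo hp (ptrans hp (psymm hp hbmax) hbmax),
          Or.inr (r_ee he), Or.inl (r_oo hp hbmax)⟩)
      rcases this with hr | ⟨_, _, hm, _⟩
      · have := r_parity hp hr
        omega
      · rcases hm with hm | hm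
        · obtain ⟨w, hw, hweq, _, _⟩ := odd_block_mem hp (by omega) hm
          have hweq' : w = m' := by omega
          have hbm' : p b0 m' := by rw [← hweq']; exact hw
          exact hmnB (ptrans hp hbm' (psymm hp pmm'))
        · obtain ⟨w, hw, hweq, hw1, _⟩ := even_block_mem hp (by omega) hm
          omega
  · -- bmin ≤ e : pivot b = largest element of Bs ∩ Iic e
    have hene : (Bs ∩ Set.Iic e).Nonempty := ⟨bmin, hbmin, hcase⟩
    have hbddi : BddAbove (Bs ∩ Set.Iic e) := ⟨n, fun x hx => (idx_mem.1 (pdom hp hx.1).2).2⟩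
    have hbmem := Nat.sSup_mem hene hbddi
    set b := sSup (Bs ∩ Set.Iic e) with hbdef
    obtain ⟨hbB, hble⟩ := hbmem
    have hbI := idx_mem.1 (pdom hp hbB).2
    have hbe : b < e := by
      rcases eq_or_lt_of_le (show b ≤ e from hble) with h | h
      · exact absurd (K_refl hp (idx_mem.2 (by omega))) (h ▸ hno b hbB)
      · exact h
    have hub : ∀ z, z ∈ Bs → z ≤ e → z ≤ b := fun z hz hze => le_csSup hbddi ⟨hz, hze⟩
    obtain ⟨m, m', pmm', hm1, hm2, hm3⟩ := K_not hp (idx_mem.2 (by omega))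
      (idx_mem.2 (by omega)) (fun h => hno b hbB (K_symm hp h))
    have hminmax : min b e = b ∧ max b e = e := by
      constructor <;> [exact min_eq_left (by omega); exact max_eq_right (by omega)]
    simp only [hminmax.1, hminmax.2] at hm1 hm2 hm3
    have hmnB : m ∉ Bs := fun hm => by have := hub m hm hm2; omega
    have hmI := idx_mem.1 (pdom hp pmm').1
    have hmI' := idx_mem.1 (pdom hp pmm').2
    rcases (by omega : e < m' ∨ m' ≤ b) with hm' | hm'
    · have := H (2*b - 1) (2*m - 1) (2*e) (2*m' - 1) (by omega) (by omega) (by omega)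
        (Or.inr ⟨r_oo hp (ptrans hp (psymm hp hbB) hbB), r_ee he,
          Or.inl (r_oo hp hbB), Or.inr (r_ee he)⟩)
        (Or.inl (r_oo hp pmm'))
      rcases this with hr | ⟨_, _, _, hm⟩
      · rcases r_cases hp hr with ⟨x, z, hx, hz, e1, e2, hr'⟩ | ⟨x, z, hx, hz, e1, e2, hr'⟩ <;>
          rw [idx_mem] at hx hz
        · have hxz : x = b ∧ z = m := by omega
          have hbm : p b m := by rw [← hxz.1, ← hxz.2]; exact hr'
          exact hmnB (ptrans hp hbB hbm)
        · omega
      · rcases hm with hm | hm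
        · obtain ⟨w, hw, hweq, _, _⟩ := odd_block_mem hp (by omega) hm
          have : w = m := by omega
          exact hmnB (this ▸ hw)
        · obtain ⟨w, hw, hweq, hw1, _⟩ := even_block_mem hp (by omega) hm
          omega
    · have hm'b : m' < b := by
        rcases eq_or_lt_of_le hm' with h | h
        · exfalso
          have hbm' : p b0 m' := by rw [h]; exact hbB
          exact hmnB (ptrans hp hbm' (psymm hp pmm'))
        · exact h
      have := H (2*m' - 1) (2*b - 1) (2*m - 1) (2*e) (by omega) (by omega) (by omega)
        (Or.inl (r_oo hp (psymm hp pmm')))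
        (Or.inr ⟨r_oo hp (ptrans hp (psymm hp hbB) hbB), r_ee he,
          Or.inl (r_oo hp hbB), Or.inr (r_ee he)⟩)
      rcases this with hr | ⟨_, _, hm, _⟩
      · rcases r_cases hp hr with ⟨x, z, hx, hz, e1, e2, hr'⟩ | ⟨x, z, hx, hz, e1, e2, hr'⟩ <;>
          rw [idx_mem] at hx hz
        · have hxz : x = m' ∧ z = b := by omega
          have hm'b2 : p m' b := by rw [← hxz.1, ← hxz.2]; exact hr'
          exact hmnB (ptrans hp (ptrans hp hbB (psymm hp hm'b2)) (psymm hp pmm'))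
        · omega
      · rcases hm with hm | hm
        · obtain ⟨w, hw, hweq, _, _⟩ := odd_block_mem hp (by omega) hm
          have hweq' : w = m' := by omega
          have hbm' : p b0 m' := by rw [← hweq']; exact hw
          exact hmnB (ptrans hp hbm' (psymm hp pmm'))
        · obtain ⟨w, hw, hweq, hw1, _⟩ := even_block_mem hp (by omega) hm
          omega

end EvenAdj
section DepthLayer

variable {n : ℕ} {p : ℕ → ℕ → Prop}

lemma rblock_sub (hp : IsPartitionOn (Idx n) p) {X : Set ℕ} (hX : IsBlock (pCirc n p) X) :
    X.Nonempty ∧ X ⊆ Set.Icc 1 (2*n) := by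
  obtain ⟨i, hi, rfl⟩ := hX
  exact ⟨⟨i, hi⟩, fun x hx => (r_dom hp hx).2⟩

lemma rblock_pair (hp : IsPartitionOn (Idx n) p) {X : Set ℕ} (hX : IsBlock (pCirc n p) X)
    {u v : ℕ} (hu : u ∈ X) (hv : v ∈ X) : pCirc n p u v := by
  obtain ⟨i, hi, rfl⟩ := hX
  exact r_trans hp (r_symm hp hu) hv

lemma rblock_eq (hp : IsPartitionOn (Idx n) p) {X Y : Set ℕ} (hX : IsBlock (pCirc n p) X)
    (hY : IsBlock (pCirc n p) Y) {u : ℕ} (hu : u ∈ X) (hu' : u ∈ Y) : X = Y := by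
  obtain ⟨i, hi, rfl⟩ := hX
  obtain ⟨j, hj, rfl⟩ := hY
  ext y
  constructor
  · intro hy
    exact r_trans hp (r_trans hp hu' (r_symm hp hu)) hy
  · intro hy
    exact r_trans hp (r_trans hp hu (r_symm hp hu')) hy

lemma depth_one_mem {X : Set ℕ} (hX : IsBlock (pCirc n p) X) :
    1 ∈ {m : ℕ | ∃ c : ℕ → Set ℕ, c 1 = X ∧
      (∀ i, 1 ≤ i → i ≤ m → IsBlock (pCirc n p) (c i)) ∧
      (∀ i, 1 ≤ i → i < m → Nested (c i) (c (i + 1)))} := by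
  refine ⟨fun _ => X, rfl, fun i _ _ => hX, fun i h1 h2 => absurd h2 (by omega)⟩

lemma depth_set_bdd (hp : IsPartitionOn (Idx n) p) (X : Set ℕ) :
    BddAbove {m : ℕ | ∃ c : ℕ → Set ℕ, c 1 = X ∧
      (∀ i, 1 ≤ i → i ≤ m → IsBlock (pCirc n p) (c i)) ∧
      (∀ i, 1 ≤ i → i < m → Nested (c i) (c (i + 1)))} := by
  refine ⟨2*n, fun m hm => ?_⟩
  obtain ⟨c, hc1, hcb, hcn⟩ := hm
  rcases Nat.eq_zero_or_pos m with rfl | hm0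
  · exact Nat.zero_le _
  have key : ∀ j, 1 ≤ j → j ≤ m → j ≤ sSup (c j) := by
    intro j
    induction j with
    | zero => omega
    | succ k ih =>
      intro h1 h2
      rcases Nat.eq_zero_or_pos k with rfl | hk
      · obtain ⟨hne, hsub⟩ := rblock_sub hp (hcb 1 le_rfl (by omega))
        have hmem := Nat.sSup_mem hne ⟨2*n, fun x hx => (hsub hx).2⟩
        have := (hsub hmem).1
        simpa using this
      · have hih := ih (by omega) (by omega)
        have hnest := (hcn k (by omega) (by omega)).2
        omega
  have h1 := key m (by omega) le_rfl
  obtain ⟨hne, hsub⟩ := rblock_sub hp (hcb m (by omega) le_rfl)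
  have hmem := Nat.sSup_mem hne ⟨2*n, fun x hx => (hsub hx).2⟩
  have := (hsub hmem).2
  omega

lemma one_le_depth (hp : IsPartitionOn (Idx n) p) {X : Set ℕ} (hX : IsBlock (pCirc n p) X) :
    1 ≤ depth (pCirc n p) X :=
  le_csSup (depth_set_bdd hp X) (depth_one_mem hX)

lemma depth_spec (hp : IsPartitionOn (Idx n) p) {X : Set ℕ} (hX : IsBlock (pCirc n p) X) :
    depth (pCirc n p) X ∈ {m : ℕ | ∃ c : ℕ → Set ℕ, c 1 = X ∧
      (∀ i, 1 ≤ i → i ≤ m → IsBlock (pCirc n p) (c i)) ∧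
      (∀ i, 1 ≤ i → i < m → Nested (c i) (c (i + 1)))} :=
  Nat.sSup_mem ⟨1, depth_one_mem hX⟩ (depth_set_bdd hp X)

lemma depth_lt_of_nested (hp : IsPartitionOn (Idx n) p) {X Y : Set ℕ}
    (hX : IsBlock (pCirc n p) X) (hY : IsBlock (pCirc n p) Y) (hnest : Nested Y X) :
    depth (pCirc n p) X < depth (pCirc n p) Y := by
  obtain ⟨c, hc1, hcb, hcn⟩ := depth_spec hp hX
  have hmem : depth (pCirc n p) X + 1 ∈ {m : ℕ | ∃ c : ℕ → Set ℕ, c 1 = Y ∧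
      (∀ i, 1 ≤ i → i ≤ m → IsBlock (pCirc n p) (c i)) ∧
      (∀ i, 1 ≤ i → i < m → Nested (c i) (c (i + 1)))} := by
    refine ⟨fun j => if j ≤ 1 then Y else c (j - 1), by simp, ?_, ?_⟩
    · intro i h1 h2
      by_cases hi : i ≤ 1
      · simpa [hi] using hY
      · have : 1 ≤ i - 1 ∧ i - 1 ≤ depth (pCirc n p) X := by omega
        simpa [hi] using hcb (i - 1) this.1 this.2
    · intro i h1 h2
      by_cases hi : i ≤ 1
      · have hieq : i = 1 := by omega
        subst hieq
        simp only [le_rfl, if_pos, show ¬ (1 + 1 ≤ 1) by omega, if_neg]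
        simpa [hc1] using hnest
      · have heq : i - 1 + 1 = i := by omega
        have := hcn (i - 1) (by omega) (by omega)
        rw [heq] at this
        simpa [hi, show ¬ (i + 1 ≤ 1) by omega] using this
  have h2 : depth (pCirc n p) X + 1 ≤ depth (pCirc n p) Y :=
    le_csSup (depth_set_bdd hp Y) hmem
  omega

lemma depth_le_of_parent (hp : IsPartitionOn (Idx n) p) {X Y : Set ℕ}
    (hX : IsBlock (pCirc n p) X) (hY : IsBlock (pCirc n p) Y)
    (h : ∀ Z, IsBlock (pCirc n p) Z → Nested Y Z → Nested X Z) :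
    depth (pCirc n p) Y ≤ depth (pCirc n p) X := by
  refine csSup_le ⟨1, depth_one_mem hY⟩ ?_
  intro m hm
  rcases Nat.eq_zero_or_pos m with rfl | hm0
  · exact Nat.zero_le _
  obtain ⟨c, hc1, hcb, hcn⟩ := hm
  refine le_csSup (depth_set_bdd hp X) ⟨fun j => if j ≤ 1 then X else c j, by simp, ?_, ?_⟩
  · intro i h1 h2
    by_cases hi : i ≤ 1
    · simpa [hi] using hX
    · simpa [hi] using hcb i h1 h2
  · intro i h1 h2
    by_cases hi : i ≤ 1
    · have hieq : i = 1 := by omega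
      subst hieq
      simp only [le_rfl, if_pos, show ¬ (1 + 1 ≤ 1) by omega, if_neg]
      have hnest := hcn 1 le_rfl h2
      rw [hc1] at hnest
      exact h (c 2) (hcb 2 (by omega) (by omega)) hnest
    · have := hcn i h1 h2
      simpa [hi, show ¬ (i + 1 ≤ 1) by omega] using this

end DepthLayer

section CountLayer

lemma cnt_mono {S : Set ℕ} (hfin : S.Finite) {x y : ℕ} (h : x ≤ y) :
    (S ∩ Set.Iic x).ncard ≤ (S ∩ Set.Iic y).ncard :=
  Set.ncard_le_ncard (Set.inter_subset_inter_right S (Set.Iic_subset_Iic.2 h))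
    (hfin.subset Set.inter_subset_left)

lemma cnt_strict {S : Set ℕ} (hfin : S.Finite) {x y : ℕ} (hxy : x < y) (hy : y ∈ S) :
    (S ∩ Set.Iic x).ncard < (S ∩ Set.Iic y).ncard := by
  apply Set.ncard_lt_ncard _ (hfin.subset Set.inter_subset_left)
  rw [Set.ssubset_iff_of_subset (Set.inter_subset_inter_right S (Set.Iic_subset_Iic.2 (le_of_lt hxy)))]
  exact ⟨y, ⟨hy, Set.mem_Iic.2 le_rfl⟩, fun hmem => by have := hmem.2; simp at this; omega⟩

lemma cnt_min {S : Set ℕ} (hne : S.Nonempty) : (S ∩ Set.Iic (sInf S)).ncard = 1 := by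
  have : S ∩ Set.Iic (sInf S) = {sInf S} := by
    ext z
    constructor
    · rintro ⟨hz1, hz2⟩
      have := Nat.sInf_le hz1
      simp only [Set.mem_Iic] at hz2
      simp only [Set.mem_singleton_iff]
      omega
    · rintro rfl
      exact ⟨Nat.sInf_mem hne, Set.mem_Iic.2 le_rfl⟩
  rw [this, Set.ncard_singleton]

lemma cnt_max {S : Set ℕ} (hfin : S.Finite) : (S ∩ Set.Iic (sSup S)).ncard = S.ncard := by
  congr 1
  rw [Set.inter_eq_left]
  exact fun x hx => le_csSup hfin.bddAbove hx

lemma cnt_surj {S : Set ℕ} (hfin : S.Finite) (hne : S.Nonempty) :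
    ∀ i, 1 ≤ i → i ≤ S.ncard → ∃ x ∈ S, (S ∩ Set.Iic x).ncard = i := by
  intro i h1
  induction i, h1 using Nat.le_induction with
  | base => exact fun _ => ⟨sInf S, Nat.sInf_mem hne, cnt_min hne⟩
  | succ i hi ih =>
    intro h2
    obtain ⟨x, hx, hcx⟩ := ih (by omega)
    have hxmax : x ≠ sSup S := by
      intro h'
      rw [h', cnt_max hfin] at hcx
      omega
    have hxlt : x < sSup S := lt_of_le_of_ne (le_csSup hfin.bddAbove hx) hxmax
    have hione : (S ∩ Set.Ioi x).Nonempty :=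
      ⟨sSup S, Nat.sSup_mem hne hfin.bddAbove, Set.mem_Ioi.2 hxlt⟩
    obtain ⟨hyS, hyx⟩ := Nat.sInf_mem hione
    rw [Set.mem_Ioi] at hyx
    have hins : S ∩ Set.Iic (sInf (S ∩ Set.Ioi x)) =
        insert (sInf (S ∩ Set.Ioi x)) (S ∩ Set.Iic x) := by
      ext z
      constructor
      · rintro ⟨hz1, hz2⟩
        rw [Set.mem_Iic] at hz2
        rcases le_or_gt z x with hzx | hzx
        · exact Set.mem_insert_of_mem _ ⟨hz1, Set.mem_Iic.2 hzx⟩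
        · have hle := Nat.sInf_le (show z ∈ S ∩ Set.Ioi x from ⟨hz1, Set.mem_Ioi.2 hzx⟩)
          have hzy : z = sInf (S ∩ Set.Ioi x) := by omega
          exact hzy ▸ Set.mem_insert _ _
      · intro hz
        rw [Set.mem_insert_iff] at hz
        rcases hz with rfl | ⟨hz1, hz2⟩
        · exact ⟨hyS, Set.mem_Iic.2 le_rfl⟩
        · rw [Set.mem_Iic] at hz2
          exact ⟨hz1, Set.mem_Iic.2 (by omega)⟩
    have hcount : (S ∩ Set.Iic (sInf (S ∩ Set.Ioi x))).ncard = (S ∩ Set.Iic x).ncard + 1 := by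
      rw [hins]
      exact Set.ncard_insert_of_notMem (fun hmem => by
        have := hmem.2
        rw [Set.mem_Iic] at this
        omega) (hfin.subset Set.inter_subset_left)
    exact ⟨sInf (S ∩ Set.Ioi x), hyS, by omega⟩

lemma nth_spec {S : Set ℕ} (hfin : S.Finite) (hne : S.Nonempty) {i : ℕ} (h1 : 1 ≤ i)
    (h2 : i ≤ S.ncard) : nthSmall S i ∈ S ∧ (S ∩ Set.Iic (nthSmall S i)).ncard = i := by
  have : {x | x ∈ S ∧ (S ∩ Set.Iic x).ncard = i}.Nonempty := by
    obtain ⟨x, hx, hcx⟩ := cnt_surj hfin hne i h1 h2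
    exact ⟨x, hx, hcx⟩
  exact Nat.sInf_mem this

end CountLayer

/-- enveloping blocks. For a block `B` of `p ∈ NC(n)` (viewed as
the block `oddPos '' B` of `p°`): (i) every block of `p°` adjacent to it
consists of even positions, i.e. comes from `K(p)`; (ii) exactly one adjacent
block has depth at most `d_{p°}(B)`; (iii) the adjacent blocks of strictly
larger depth number exactly `|B| - 1`, and for each `1 ≤ i ≤ |B| - 1` exactly
one of them lies entirely strictly between the positions of the `i`-th and
`(i+1)`-th smallest elements of `B`. -/
theorem enveloping_blocks
    (n : ℕ) (p : ℕ → ℕ → Prop)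
    (hp : IsPartitionOn (Idx n) p) (hnc : NonCrossing p)
    (B : Set ℕ) (hB : IsBlock p B) :
    (∀ C : Set ℕ, Adjacent (pCirc n p) (oddPos '' B) C →
      (∀ x ∈ C, Even x) ∧ ∃ C₀ : Set ℕ, IsBlock (Kmap n p) C₀ ∧ C = evenPos '' C₀) ∧
    (∃! C : Set ℕ, Adjacent (pCirc n p) (oddPos '' B) C ∧
      depth (pCirc n p) C ≤ depth (pCirc n p) (oddPos '' B)) ∧
    {C : Set ℕ | Adjacent (pCirc n p) (oddPos '' B) C ∧
      depth (pCirc n p) (oddPos '' B) < depth (pCirc n p) C}.ncard = B.ncard - 1 ∧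
    (∀ i, 1 ≤ i → i ≤ B.ncard - 1 →
      ∃! C : Set ℕ, Adjacent (pCirc n p) (oddPos '' B) C ∧
        depth (pCirc n p) (oddPos '' B) < depth (pCirc n p) C ∧
        ∀ x ∈ C, oddPos (nthSmall B i) < x ∧ x < oddPos (nthSmall B (i + 1))) := by
  obtain ⟨b0, hb0, hBe⟩ := hB
  subst hBe
  have hb0I := idx_mem.1 (pdom hp hb0).1
  have hBfin : ({j | p b0 j} : Set ℕ).Finite :=
    Set.Finite.subset (Set.finite_Icc 1 n) (fun x hx => (pdom hp hx).2)
  have hBne : ({j | p b0 j} : Set ℕ).Nonempty := ⟨b0, hb0⟩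
  have hbmaxB : p b0 (sSup {j | p b0 j}) := Nat.sSup_mem hBne (pblock_bdd hp b0)
  have hbminB : p b0 (sInf {j | p b0 j}) := Nat.sInf_mem hBne
  set bmax := sSup {j | p b0 j} with hbmaxdef
  set bmin := sInf {j | p b0 j} with hbmindef
  have hbmaxI := idx_mem.1 (pdom hp hbmaxB).2
  have hbminI := idx_mem.1 (pdom hp hbminB).2
  -- the block of p transported to odd positions
  have hBhat : oddPos '' {j | p b0 j} = {y | pCirc n p (2*b0 - 1) y} := by
    ext y
    constructor
    · rintro ⟨m, hm, rfl⟩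
      exact r_oo hp hm
    · intro hy
      obtain ⟨m, hm, heq, h1, h2⟩ := odd_block_mem hp (by omega) hy
      exact ⟨m, hm, by rw [heq]; rfl⟩
  rw [hBhat]
  have hXblock : IsBlock (pCirc n p) {y | pCirc n p (2*b0 - 1) y} :=
    ⟨2*b0 - 1, r_oo hp hb0, rfl⟩
  have hEblock : ∀ b, p b0 b → IsBlock (pCirc n p) {y | pCirc n p (2*b) y} := by
    intro b hb
    exact ⟨2*b, r_ee (K_refl hp (pdom hp hb).2), rfl⟩
  -- containment of K-blocks of elements of B between consecutive elements
  have hEcont : ∀ b b' f, p b0 b → p b0 b' → b < b' → Kmap n p b f → b ≤ f ∧ f < b' := by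
    intro b b' f hb hb' hlt hK
    have pbb' : p b b' := ptrans hp (psymm hp hb) hb'
    constructor
    · by_contra hcon
      push_neg at hcon
      have := K_elim hp hK pbb' (by omega) (by omega)
      omega
    · by_contra hcon
      push_neg at hcon
      have := K_elim hp hK (psymm hp pbb') (by omega) (by omega)
      omega
  -- adjacency of each K-block of an element of B
  have hadj : ∀ b, p b0 b → Adjacent (pCirc n p) {y | pCirc n p (2*b0 - 1) y}
      {y | pCirc n p (2*b) y} := by
    intro b hb
    have hbI := idx_mem.1 (pdom hp hb).2
    refine ⟨hXblock, hEblock b hb, ?_, merge_ok hp hnc hb0 hb⟩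
    intro h
    have hmem : (2*b) ∈ {y | pCirc n p (2*b) y} := r_ee (K_refl hp (pdom hp hb).2)
    rw [← h] at hmem
    obtain ⟨m, hm, heq, h1, h2⟩ := odd_block_mem hp (by omega) hmem
    omega
  -- every adjacent block is the K-block of an element of B
  have hadj' : ∀ C, Adjacent (pCirc n p) {y | pCirc n p (2*b0 - 1) y} C →
      ∃ b, p b0 b ∧ C = {y | pCirc n p (2*b) y} := by
    rintro C ⟨_, hCblk, hneC, hmerge⟩
    obtain ⟨w, hw, rfl⟩ := hCblk
    rcases r_cases hp hw with ⟨a', c', ha', hc', heq1, heq2, hra⟩ |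
      ⟨a', c', ha', hc', heq1, heq2, hra⟩ <;> rw [idx_mem] at ha' hc'
    · exfalso
      have haa : a' = c' := by omega
      subst haa
      subst heq1
      have hnac : ¬ p b0 a' := by
        intro hcon
        exact hneC (rblock_eq hp hXblock ⟨2*a' - 1, hw, rfl⟩
          (show (2*a' - 1) ∈ {y | pCirc n p (2*b0 - 1) y} from r_oo hp hcon) hw)
      exact odd_not_adjacent hp hnc hb0 hra hnac hmerge
    · have haa : a' = c' := by omega
      subst haa
      subst heq1
      obtain ⟨b, hbB, hKb⟩ := even_adjacent_hits hp hnc hb0 hra hmerge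
      refine ⟨b, hbB, ?_⟩
      exact block_rerep hp (r_ee hKb)
  -- extremes of the odd block
  have hXne : ({y | pCirc n p (2*b0 - 1) y} : Set ℕ).Nonempty := ⟨2*b0 - 1, r_oo hp hb0⟩
  have hXbdd : BddAbove {y | pCirc n p (2*b0 - 1) y} :=
    ⟨2*n, fun x hx => (idx_mem.1 (r_dom hp hx).2).2⟩
  have hXinf : sInf {y | pCirc n p (2*b0 - 1) y} = 2*bmin - 1 := by
    apply le_antisymm (Nat.sInf_le (show (2*bmin - 1) ∈ {y | pCirc n p (2*b0 - 1) y} from r_oo hp hbminB))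
    have hmem := Nat.sInf_mem hXne
    obtain ⟨m, hm, heq, h1, h2⟩ := odd_block_mem hp (by omega) hmem
    have : bmin ≤ m := Nat.sInf_le hm
    omega
  have hXsup : sSup {y | pCirc n p (2*b0 - 1) y} = 2*bmax - 1 := by
    apply le_antisymm
    · have hmem := Nat.sSup_mem hXne hXbdd
      obtain ⟨m, hm, heq, h1, h2⟩ := odd_block_mem hp (by omega) hmem
      have : m ≤ bmax := le_csSup (pblock_bdd hp b0) hm
      omega
    · exact le_csSup hXbdd (show (2*bmax - 1) ∈ {y | pCirc n p (2*b0 - 1) y} from r_oo hp hbmaxB)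
  -- nesting of the K-blocks of non-maximal elements of B
  have hnest : ∀ b, p b0 b → b < bmax →
      Nested {y | pCirc n p (2*b) y} {y | pCirc n p (2*b0 - 1) y} := by
    intro b hbB hblt
    have hbI := idx_mem.1 (pdom hp hbB).2
    have hEne : ({y | pCirc n p (2*b) y} : Set ℕ).Nonempty :=
      ⟨2*b, r_ee (K_refl hp (pdom hp hbB).2)⟩
    have hEbdd : BddAbove {y | pCirc n p (2*b) y} :=
      ⟨2*n, fun x hx => (idx_mem.1 (r_dom hp hx).2).2⟩
    have hbminle : bmin ≤ b := Nat.sInf_le (show b ∈ {j | p b0 j} from hbB)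
    constructor
    · rw [hXinf]
      have hmem := Nat.sInf_mem hEne
      obtain ⟨f, hf, heq, h1, h2⟩ := even_block_mem hp (by omega) hmem
      have := hEcont b bmax f hbB hbmaxB hblt hf
      omega
    · rw [hXsup]
      have hmem := Nat.sSup_mem hEne hEbdd
      obtain ⟨f, hf, heq, h1, h2⟩ := even_block_mem hp (by omega) hmem
      have := hEcont b bmax f hbB hbmaxB hblt hf
      omega
  have hchild : ∀ b, p b0 b → b < bmax →
      depth (pCirc n p) {y | pCirc n p (2*b0 - 1) y} <
      depth (pCirc n p) {y | pCirc n p (2*b) y} := by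
    intro b hbB hblt
    exact depth_lt_of_nested hp hXblock (hEblock b hbB) (hnest b hbB hblt)
  -- the parent block has depth at most that of the odd block
  have hpar : depth (pCirc n p) {y | pCirc n p (2*bmax) y} ≤
      depth (pCirc n p) {y | pCirc n p (2*b0 - 1) y} := by
    refine depth_le_of_parent hp hXblock (hEblock bmax hbmaxB) ?_
    intro Z hZ hnested
    obtain ⟨hZne, hZsub⟩ := rblock_sub hp hZ
    have hZbdd : BddAbove Z := ⟨2*n, fun x hx => (hZsub hx).2⟩
    have hsZ : sInf Z ∈ Z := Nat.sInf_mem hZne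
    have hsZ' : sSup Z ∈ Z := Nat.sSup_mem hZne hZbdd
    obtain ⟨hn1, hn2⟩ := hnested
    have h2bmem : (2*bmax) ∈ {y | pCirc n p (2*bmax) y} :=
      r_ee (K_refl hp (pdom hp hbmaxB).2)
    have hEinfle : sInf {y | pCirc n p (2*bmax) y} ≤ 2*bmax := Nat.sInf_le h2bmem
    have hEbdd : BddAbove {y | pCirc n p (2*bmax) y} :=
      ⟨2*n, fun x hx => (idx_mem.1 (r_dom hp hx).2).2⟩
    have hEsupge : 2*bmax ≤ sSup {y | pCirc n p (2*bmax) y} := le_csSup hEbdd h2bmem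
    have hbminmax : bmin ≤ bmax := Nat.sInf_le (show bmax ∈ {j | p b0 j} from hbmaxB)
    have hZeqB : sInf Z ∈ {y | pCirc n p (2*b0 - 1) y} → False := by
      intro hmem
      have hZX : Z = {y | pCirc n p (2*b0 - 1) y} := rblock_eq hp hZ hXblock hsZ hmem
      rw [hZX, hXsup] at hn2
      omega
    constructor
    · rw [hXinf]
      by_contra hcon
      push_neg at hcon
      rcases eq_or_lt_of_le hcon with h | h
      · apply hZeqB
        rw [← h]
        exact r_oo hp hbminB
      · have hlt2 : sInf Z < 2*bmax - 1 := by
          rcases lt_trichotomy (sInf Z) (2*bmax - 1) with h' | h' | h'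
          · exact h'
          · exfalso
            apply hZeqB
            rw [h']
            exact r_oo hp hbmaxB
          · omega
        have hcross := pcirc_nc hp hnc (2*bmin - 1) (sInf Z) (2*bmax - 1) (sSup Z)
          (by omega) hlt2 (by omega)
          (r_oo hp (ptrans hp (psymm hp hbminB) hbmaxB))
          (rblock_pair hp hZ hsZ hsZ')
        exact hZeqB (r_trans hp (r_oo hp hbminB) hcross)
    · rw [hXsup]
      omega
  -- distinctness of the K-blocks
  have hEdist : ∀ b b', p b0 b → p b0 b' → b < b' →
      {y | pCirc n p (2*b) y} ≠ {y | pCirc n p (2*b') y} := by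
    intro b b' hb hb' hlt heq
    have hmem : (2*b') ∈ {y | pCirc n p (2*b') y} := r_ee (K_refl hp (pdom hp hb').2)
    rw [← heq] at hmem
    have hbI := idx_mem.1 (pdom hp hb).2
    obtain ⟨f, hf, hfe, h1, h2⟩ := even_block_mem hp (by omega) hmem
    have hff : f = b' := by omega
    have := hEcont b b' f hb hb' hlt hf
    omega
  refine ⟨?_, ?_, ?_, ?_⟩
  · -- part (i)
    rintro C ⟨_, hCblk, hneC, hmerge⟩
    obtain ⟨w, hw, rfl⟩ := hCblk
    rcases r_cases hp hw with ⟨a', c', ha', hc', heq1, heq2, hra⟩ |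
      ⟨a', c', ha', hc', heq1, heq2, hra⟩ <;> rw [idx_mem] at ha' hc'
    · exfalso
      have haa : a' = c' := by omega
      subst haa
      subst heq1
      have hnac : ¬ p b0 a' := by
        intro hcon
        exact hneC (rblock_eq hp hXblock ⟨2*a' - 1, hw, rfl⟩
          (show (2*a' - 1) ∈ {y | pCirc n p (2*b0 - 1) y} from r_oo hp hcon) hw)
      exact odd_not_adjacent hp hnc hb0 hra hnac hmerge
    · have haa : a' = c' := by omega
      subst haa
      subst heq1
      constructor
      · intro x hx
        obtain ⟨f, hf, rfl, h1, h2⟩ := even_block_mem hp (by omega) hx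
        exact ⟨f, by omega⟩
      · refine ⟨{j | Kmap n p a' j}, ⟨a', hra, rfl⟩, ?_⟩
        ext x
        constructor
        · intro hx
          obtain ⟨f, hf, rfl, h1, h2⟩ := even_block_mem hp (by omega) hx
          exact ⟨f, hf, rfl⟩
        · rintro ⟨f, hf, rfl⟩
          exact r_ee hf
  · -- part (ii)
    refine ⟨{y | pCirc n p (2*bmax) y}, ⟨hadj bmax hbmaxB, hpar⟩, ?_⟩
    rintro C ⟨hCadj, hCdep⟩
    obtain ⟨b, hbB, rfl⟩ := hadj' C hCadj
    rcases eq_or_lt_of_le (le_csSup (pblock_bdd hp b0) (show b ∈ {m | p b0 m} from hbB) : b ≤ bmax) with h | h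
    · rw [h]
    · exact absurd hCdep (not_le.2 (lt_of_lt_of_le (hchild b hbB h) le_rfl))
  · -- part (iii)
    have hseteq : {C : Set ℕ | Adjacent (pCirc n p) {y | pCirc n p (2*b0 - 1) y} C ∧
        depth (pCirc n p) {y | pCirc n p (2*b0 - 1) y} < depth (pCirc n p) C} =
        (fun b => {y | pCirc n p (2*b) y}) '' ({j | p b0 j} \ {bmax}) := by
      ext C
      simp only [Set.mem_setOf_eq, Set.mem_image, Set.mem_diff, Set.mem_singleton_iff]
      constructor
      · rintro ⟨hCadj, hCdep⟩
        obtain ⟨b, hbB, rfl⟩ := hadj' C hCadj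
        refine ⟨b, ⟨hbB, ?_⟩, rfl⟩
        intro h
        subst h
        exact absurd hCdep (not_lt.2 hpar)
      · rintro ⟨b, ⟨hbB, hbne⟩, rfl⟩
        have hblt : b < bmax := lt_of_le_of_ne (le_csSup (pblock_bdd hp b0) (show b ∈ {m | p b0 m} from hbB)) hbne
        exact ⟨hadj b hbB, hchild b hbB hblt⟩
    have hinj : Set.InjOn (fun b => {y | pCirc n p (2*b) y}) ({j | p b0 j} \ {bmax}) := by
      intro b1 hb1 b2 hb2 heq
      rcases lt_trichotomy b1 b2 with h | h | h
      · exact absurd heq (hEdist b1 b2 hb1.1 hb2.1 h)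
      · exact h
      · exact absurd heq.symm (hEdist b2 b1 hb2.1 hb1.1 h)
    rw [hseteq, Set.ncard_image_of_injOn hinj]
    exact Set.ncard_diff_singleton_of_mem (show bmax ∈ {j | p b0 j} from hbmaxB)
  · -- part (iv)
    intro i hi1 hi2
    have hcard : 1 ≤ ({j | p b0 j} : Set ℕ).ncard := (Set.ncard_pos hBfin).2 hBne
    obtain ⟨hbB, hcb⟩ := nth_spec hBfin hBne hi1 (by omega)
    obtain ⟨hb'B, hcb'⟩ := nth_spec hBfin hBne (by omega : 1 ≤ i + 1) (by omega)
    have hblt : nthSmall {j | p b0 j} i < nthSmall {j | p b0 j} (i + 1) := by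
      by_contra hcon
      push_neg at hcon
      have := cnt_mono hBfin hcon
      omega
    have hgapB : ∀ z, p b0 z →
        ¬ (nthSmall {j | p b0 j} i < z ∧ z < nthSmall {j | p b0 j} (i + 1)) := by
      rintro z hz ⟨h1, h2⟩
      have t1 := cnt_strict hBfin h1 hz
      have t2 := cnt_strict hBfin h2 hb'B
      omega
    have hbmaxne : nthSmall {j | p b0 j} i < bmax := by
      have hmx := cnt_max hBfin (S := {j | p b0 j})
      rw [← hbmaxdef] at hmx
      have hble : nthSmall {j | p b0 j} i ≤ bmax :=
        le_csSup (pblock_bdd hp b0) (show nthSmall {j | p b0 j} i ∈ {m | p b0 m} from hbB)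
      rcases eq_or_lt_of_le hble with h | h
      · rw [h] at hcb
        omega
      · exact h
    have hb1I := idx_mem.1 (pdom hp hbB).2
    refine ⟨{y | pCirc n p (2*(nthSmall {j | p b0 j} i)) y},
      ⟨hadj _ hbB, hchild _ hbB hbmaxne, ?_⟩, ?_⟩
    · intro x hx
      obtain ⟨f, hf, rfl, h1, h2⟩ := even_block_mem hp (by omega) hx
      have := hEcont _ _ f hbB hb'B hblt hf
      constructor
      · show 2*(nthSmall {j | p b0 j} i) - 1 < 2*f
        omega
      · show 2*f < 2*(nthSmall {j | p b0 j} (i+1)) - 1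
        omega
    · rintro C ⟨hCadj, hCdep, hCwin⟩
      obtain ⟨c, hcB, rfl⟩ := hadj' C hCadj
      have h2c := hCwin (2*c) (r_ee (K_refl hp (pdom hp hcB).2))
      have h2c1 : 2*(nthSmall {j | p b0 j} i) - 1 < 2*c := h2c.1
      have h2c2 : 2*c < 2*(nthSmall {j | p b0 j} (i+1)) - 1 := h2c.2
      have hcI := idx_mem.1 (pdom hp hcB).2
      have hb'I := idx_mem.1 (pdom hp hb'B).2
      rcases eq_or_lt_of_le (by omega : nthSmall {j | p b0 j} i ≤ c) with h | h
      · rw [← h]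
      · exact absurd (show nthSmall {j | p b0 j} i < c ∧ c < nthSmall {j | p b0 j} (i+1)
          from ⟨h, by omega⟩) (hgapB c hcB)


end NCPaper
end

section
/- Let p ∈ NC(n) and suppose 1 ∼_p k for some 1 < k ≤ n. Then every block of p other than the block containing 1 is contained either in {1,…,k−1} or in {k,…,n}, and every block of the Kreweras complement K(p) is contained either in {1,…,k−1} or in {k,…,n}. -/
namespace NCPaper

/-- Auxiliary: if `p 1 k` then no `K(p)`-relation can straddle position `k`. -/
lemma kmap_localize (n : ℕ) (p : ℕ → ℕ → Prop) (hsym : ∀ i j, p i j → p j i)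
    (k : ℕ) (hk1 : 1 ≤ k) (hkn : k ≤ n) (h1k : p 1 k)
    (a b : ℕ) (hab : Kmap n p a b) (hm : min a b < k) (hM : k ≤ max a b) : False := by
  obtain ⟨hai, hbi, -, -, H⟩ := hab
  simp only [Idx, evenPos, Set.mem_Icc] at hai hbi
  refine H (oddPos k) (oddPos 1) ⟨k, ⟨by omega, hkn⟩, rfl⟩ ⟨1, ⟨le_refl 1, by omega⟩, rfl⟩
    ?_ ?_ ⟨k, 1, rfl, rfl, hsym 1 k h1k⟩
  · refine ⟨?_, ?_⟩ <;> simp only [oddPos, evenPos] <;> omega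
  · intro hbet
    obtain ⟨h1, h2⟩ := hbet
    simp only [oddPos, evenPos] at h1 h2
    omega

/-- if `1 ∼_p k` in `p ∈ NC(n)` with `1 < k ≤ n`, then every
block of `p` not containing `1` is contained in `{1,…,k-1}` or in `{k,…,n}`,
and every block of `K(p)` is contained in `{1,…,k-1}` or in `{k,…,n}`. -/
theorem blocks_localize_of_one_rel
    (n : ℕ) (p : ℕ → ℕ → Prop)
    (hp : IsPartitionOn (Idx n) p) (hnc : NonCrossing p)
    (k : ℕ) (hk1 : 1 < k) (hkn : k ≤ n) (h1k : p 1 k) :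
    (∀ B : Set ℕ, IsBlock p B → 1 ∉ B →
      B ⊆ Set.Icc 1 (k - 1) ∨ B ⊆ Set.Icc k n) ∧
    (∀ C : Set ℕ, IsBlock (Kmap n p) C →
      C ⊆ Set.Icc 1 (k - 1) ∨ C ⊆ Set.Icc k n) := by
  obtain ⟨hsym, htrans, hdom⟩ := hp
  constructor
  · rintro B ⟨i₀, hi₀, rfl⟩ h1B
    by_contra hcon
    push_neg at hcon
    obtain ⟨hc1, hc2⟩ := hcon
    rw [Set.not_subset] at hc1 hc2
    obtain ⟨a, ha, haI⟩ := hc1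
    obtain ⟨b, hb, hbI⟩ := hc2
    have haa : a ∈ Idx n := (hdom a).mp (htrans _ _ _ (hsym _ _ ha) ha)
    have hbb : b ∈ Idx n := (hdom b).mp (htrans _ _ _ (hsym _ _ hb) hb)
    simp only [Idx, Set.mem_Icc] at haa hbb
    simp only [Set.mem_Icc, not_and, not_le] at haI hbI
    have hak : k ≤ a := by omega
    have hbk : b < k := by omega
    have hb1 : 1 < b := by
      rcases Nat.lt_or_ge 1 b with h' | h'
      · exact h'
      · exfalso
        have hb1' : b = 1 := by omega
        rw [hb1'] at hb
        exact h1B hb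
    have pba : p b a := htrans _ _ _ (hsym _ _ hb) ha
    have hpb1 : p b 1 := by
      rcases Nat.eq_or_lt_of_le hak with h' | h'
      · exact htrans _ _ _ pba (h' ▸ hsym _ _ h1k)
      · exact hsym _ _ (hnc 1 b k a hb1 hbk h' h1k pba)
    exact h1B (htrans _ _ _ hb hpb1)
  · rintro C ⟨c₀, hc₀, rfl⟩
    by_cases h : c₀ < k
    · left
      intro c hc
      have hci : 1 ≤ evenPos c ∧ evenPos c ≤ 2 * n := by
        have := hc.2.1
        simpa [Idx, Set.mem_Icc] using this
      simp only [evenPos] at hci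
      simp only [Set.mem_Icc]
      refine ⟨by omega, ?_⟩
      by_contra hck
      exact kmap_localize n p hsym k (by omega) hkn h1k c₀ c hc (by omega) (by omega)
    · right
      intro c hc
      have hci : 1 ≤ evenPos c ∧ evenPos c ≤ 2 * n := by
        have := hc.2.1
        simpa [Idx, Set.mem_Icc] using this
      simp only [evenPos] at hci
      simp only [Set.mem_Icc]
      refine ⟨?_, by omega⟩
      by_contra hck
      exact kmap_localize n p hsym k (by omega) hkn h1k c₀ c hc (by omega) (by omega)

end NCPaper
end
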